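/- Let {V_n, ∘_i} be a pre-Lie system: V_n are k-vector spaces with k-linear maps ∘_i : V_m ⊗ V_n → V_{m+n} for 0 ≤ i ≤ m satisfying (f^m ∘_i g^n) ∘_j h^p = (f^m ∘_j h^p) ∘_{i+p} g^n for 0 ≤ j ≤ i-1 and (f^m ∘_i g^n) ∘_j h^p = f^m ∘_i (g^n ∘_{j-i} h^p) for i ≤ j ≤ i+n. Define f^m ∘ g^n = Σ_{i=0}^{m} (-1)^{ni} f^m ∘_i g^n and [f^m, g^n] = f^m ∘ g^n − (-1)^{mn} g^n ∘ f^m. Then (⊕_n V_n, [·,·]) is a graded Lie algebra (graded antisymmetry and graded Jacobi identity hold). -/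

import Mathlib

namespace PreLieSystem

/-- Transport along an equality of degrees. -/
def cst (V : ℕ → Type*) {m n : ℕ} (h : m = n) (x : V m) : V n := h ▸ x

/-- The circle product `f^m ∘ g^n = ∑_{i=0}^{m} (-1)^{ni} f^m ∘_i g^n` of a pre-Lie
system. -/
def circ (V : ℕ → Type*) [∀ n, AddCommGroup (V n)]
    (comp : ∀ m n : ℕ, ℕ → V m → V n → V (m + n))
    (m n : ℕ) (f : V m) (g : V n) : V (m + n) :=
  ∑ i ∈ Finset.range (m + 1), (-1 : ℤ)^(n * i) • comp m n i f g

/-- The graded bracket `[f^m, g^n] = f^m ∘ g^n - (-1)^{mn} g^n ∘ f^m`. -/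
def gbracket (V : ℕ → Type*) [∀ n, AddCommGroup (V n)]
    (comp : ∀ m n : ℕ, ℕ → V m → V n → V (m + n))
    (m n : ℕ) (f : V m) (g : V n) : V (m + n) :=
  circ V comp m n f g - (-1 : ℤ)^(m * n) • cst V (by omega) (circ V comp n m g f)

section Aux

variable {V : ℕ → Type*} [∀ n, AddCommGroup (V n)]

lemma npow_add_even (a b : ℕ) : (-1 : ℤ)^(a + 2*b) = (-1 : ℤ)^a := by
  rw [pow_add, pow_mul]; norm_num

def ιf {n : ℕ} (x : V n) : ∀ j, V j := fun j => if h : n = j then cst V h x else 0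

lemma ιf_add {n : ℕ} (x y : V n) : ιf (x + y) = ιf x + ιf y := by
  funext j
  simp only [Pi.add_apply, ιf]
  split_ifs with h
  · subst h; rfl
  · simp

def ι {n : ℕ} : V n →+ ∀ j, V j := AddMonoidHom.mk' ιf ιf_add

lemma ιf_self {a : ℕ} (x : V a) : ιf x a = x := by
  unfold ιf; rw [dif_pos rfl]; rfl

lemma ι_inj {a : ℕ} {x y : V a} (h : (ι x : ∀ j, V j) = ι y) : x = y := by
  have h1 : ιf x a = ιf y a := congrFun h a
  rwa [ιf_self, ιf_self] at h1

lemma ι_cst {a b : ℕ} (h : a = b) (x : V a) : ι (cst V h x) = ι x := by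
  subst h; rfl

variable (comp : ∀ m n : ℕ, ℕ → V m → V n → V (m + n))

/-- The circle-product sum, pushed into the big ambient group. -/
def O (a b : ℕ) (x : V a) (y : V b) : ∀ j, V j :=
  ∑ i ∈ Finset.range (a + 1), (-1 : ℤ)^(b * i) • ι (comp a b i x y)

lemma ι_circ (a b : ℕ) (x : V a) (y : V b) :
    ι (circ V comp a b x y) = O comp a b x y := by
  unfold circ O
  rw [map_sum]
  exact Finset.sum_congr rfl fun i _ => map_zsmul ι _ _

lemma O_cst_left {a a' b : ℕ} (h : a' = a) (x : V a') (y : V b) :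
    O comp a b (cst V h x) y = O comp a' b x y := by subst h; rfl

lemma O_cst_right {a b b' : ℕ} (h : b' = b) (x : V a) (y : V b') :
    O comp a b x (cst V h y) = O comp a b' x y := by subst h; rfl

lemma ι_gbracket (m n : ℕ) (f : V m) (g : V n) :
    ι (gbracket V comp m n f g)
      = O comp m n f g - (-1 : ℤ)^(m * n) • O comp n m g f := by
  unfold gbracket
  rw [map_sub, map_zsmul, ι_cst, ι_circ, ι_circ]

section Left
variable (hadd_left : ∀ (m n i : ℕ) (f f' : V m) (g : V n),
      comp m n i (f + f') g = comp m n i f g + comp m n i f' g)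
include hadd_left

lemma O_add_left {a b : ℕ} (x x' : V a) (y : V b) :
    O comp a b (x + x') y = O comp a b x y + O comp a b x' y := by
  unfold O
  rw [← Finset.sum_add_distrib]
  exact Finset.sum_congr rfl fun i _ => by rw [hadd_left, map_add, smul_add]

def Oleft (a b : ℕ) (y : V b) : V a →+ (∀ j, V j) :=
  AddMonoidHom.mk' (fun x => O comp a b x y) (fun x x' => O_add_left comp hadd_left x x' y)

lemma O_sub_left {a b : ℕ} (x x' : V a) (y : V b) :
    O comp a b (x - x') y = O comp a b x y - O comp a b x' y :=
  (Oleft comp hadd_left a b y).map_sub x x'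

lemma O_zsmul_left {a b : ℕ} (c : ℤ) (x : V a) (y : V b) :
    O comp a b (c • x) y = c • O comp a b x y :=
  map_zsmul (Oleft comp hadd_left a b y) c x

end Left

section Right
variable (hadd_right : ∀ (m n i : ℕ) (f : V m) (g g' : V n),
      comp m n i f (g + g') = comp m n i f g + comp m n i f g')
include hadd_right

lemma O_add_right {a b : ℕ} (x : V a) (y y' : V b) :
    O comp a b x (y + y') = O comp a b x y + O comp a b x y' := by
  unfold O
  rw [← Finset.sum_add_distrib]
  exact Finset.sum_congr rfl fun i _ => by rw [hadd_right, map_add, smul_add]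

def Oright (a b : ℕ) (x : V a) : V b →+ (∀ j, V j) :=
  AddMonoidHom.mk' (fun y => O comp a b x y) (fun y y' => O_add_right comp hadd_right x y y')

lemma O_sub_right {a b : ℕ} (x : V a) (y y' : V b) :
    O comp a b x (y - y') = O comp a b x y - O comp a b x y' :=
  (Oright comp hadd_right a b x).map_sub y y'

lemma O_zsmul_right {a b : ℕ} (c : ℤ) (x : V a) (y : V b) :
    O comp a b x (c • y) = c • O comp a b x y :=
  map_zsmul (Oright comp hadd_right a b x) c y

end Right

def Xt (a b c : ℕ) (x : V a) (y : V b) (z : V c) : ∀ j, V j :=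
  O comp (a + b) c (circ V comp a b x y) z

def Yt (a b c : ℕ) (x : V a) (y : V b) (z : V c) : ∀ j, V j :=
  O comp a (b + c) x (circ V comp b c y z)

def S1 (m n p : ℕ) (f : V m) (g : V n) (h : V p) : ∀ j, V j :=
  ∑ i ∈ Finset.range (m + 1), ∑ j ∈ Finset.range i,
    (-1 : ℤ)^(n*i + p*j) • ι (comp (m + n) p j (comp m n i f g) h)

def S2 (m n p : ℕ) (f : V m) (g : V n) (h : V p) : ∀ j, V j :=
  ∑ i ∈ Finset.range (m + 1), ∑ j ∈ Finset.Ico (i + n + 1) (m + n + 1),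
    (-1 : ℤ)^(n*i + p*j) • ι (comp (m + n) p j (comp m n i f g) h)

section Key
variable (hadd_left : ∀ (m n i : ℕ) (f f' : V m) (g : V n),
      comp m n i (f + f') g = comp m n i f g + comp m n i f' g)
    (hadd_right : ∀ (m n i : ℕ) (f : V m) (g g' : V n),
      comp m n i f (g + g') = comp m n i f g + comp m n i f g')
    (hdisj : ∀ (m n p i j : ℕ) (f : V m) (g : V n) (h : V p),
      j + 1 ≤ i → i ≤ m →
      cst V (show m + n + p = m + n + p from rfl) (comp (m + n) p j (comp m n i f g) h)
        = cst V (show m + p + n = m + n + p from Nat.add_right_comm m p n) (comp (m + p) n (i + p) (comp m p j f h) g))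
    (hnest : ∀ (m n p i j : ℕ) (f : V m) (g : V n) (h : V p),
      i ≤ j → j ≤ i + n → i ≤ m →
      comp (m + n) p j (comp m n i f g) h
        = cst V (show m + (n + p) = m + n + p from (Nat.add_assoc m n p).symm) (comp m (n + p) i f (comp n p (j - i) g h)))

include hadd_left hadd_right hnest in
lemma X_split (m n p : ℕ) (f : V m) (g : V n) (hh : V p) :
    Xt comp m n p f g hh
      = Yt comp m n p f g hh + S1 comp m n p f g hh + S2 comp m n p f g hh := by
  have hX : Xt comp m n p f g hh
      = ∑ i ∈ Finset.range (m + 1), ∑ j ∈ Finset.range (m + n + 1),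
          (-1 : ℤ)^(n*i + p*j) • ι (comp (m + n) p j (comp m n i f g) hh) := by
    unfold Xt O
    refine Eq.trans (Finset.sum_congr rfl ?_) Finset.sum_comm
    intro j _
    have hc : comp (m + n) p j (circ V comp m n f g) hh
        = ∑ i ∈ Finset.range (m + 1),
            (-1 : ℤ)^(n*i) • comp (m + n) p j (comp m n i f g) hh := by
      let F : V (m + n) →+ V (m + n + p) :=
        AddMonoidHom.mk' (fun x => comp (m + n) p j x hh)
          (fun x x' => hadd_left (m + n) p j x x' hh)
      show F _ = _
      rw [circ, map_sum]
      exact Finset.sum_congr rfl fun i _ => map_zsmul F _ _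
    rw [hc, map_sum, Finset.smul_sum]
    refine Finset.sum_congr rfl fun i _ => ?_
    rw [map_zsmul, smul_smul, ← pow_add]
    congr 2
    omega
  have hY : Yt comp m n p f g hh
      = ∑ i ∈ Finset.range (m + 1), ∑ l ∈ Finset.range (n + 1),
          (-1 : ℤ)^((n+p)*i + p*l) • ι (comp m (n + p) i f (comp n p l g hh)) := by
    unfold Yt O
    refine Finset.sum_congr rfl fun i _ => ?_
    have hc : comp m (n + p) i f (circ V comp n p g hh)
        = ∑ l ∈ Finset.range (n + 1),
            (-1 : ℤ)^(p*l) • comp m (n + p) i f (comp n p l g hh) := by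
      let F : V (n + p) →+ V (m + (n + p)) :=
        AddMonoidHom.mk' (fun y => comp m (n + p) i f y)
          (fun y y' => hadd_right m (n + p) i f y y')
      show F _ = _
      rw [circ, map_sum]
      exact Finset.sum_congr rfl fun l _ => map_zsmul F _ _
    rw [hc, map_sum, Finset.smul_sum]
    refine Finset.sum_congr rfl fun l _ => ?_
    rw [map_zsmul, smul_smul, ← pow_add]
  have hsplit : ∀ i ∈ Finset.range (m + 1),
      (∑ j ∈ Finset.range (m + n + 1),
          (-1 : ℤ)^(n*i + p*j) • ι (comp (m + n) p j (comp m n i f g) hh))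
        = ((∑ j ∈ Finset.range i,
              (-1 : ℤ)^(n*i + p*j) • ι (comp (m + n) p j (comp m n i f g) hh))
            + ∑ l ∈ Finset.range (n + 1),
              (-1 : ℤ)^((n+p)*i + p*l) • ι (comp m (n + p) i f (comp n p l g hh)))
          + ∑ j ∈ Finset.Ico (i + n + 1) (m + n + 1),
              (-1 : ℤ)^(n*i + p*j) • ι (comp (m + n) p j (comp m n i f g) hh) := by
    intro i hi
    have him : i ≤ m := by
      have := Finset.mem_range.mp hi; omega
    have hmid : (∑ j ∈ Finset.Ico i (i + n + 1),
          (-1 : ℤ)^(n*i + p*j) • ι (comp (m + n) p j (comp m n i f g) hh))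
        = ∑ l ∈ Finset.range (n + 1),
            (-1 : ℤ)^((n+p)*i + p*l) • ι (comp m (n + p) i f (comp n p l g hh)) := by
      rw [Finset.sum_Ico_eq_sum_range]
      rw [show i + n + 1 - i = n + 1 by omega]
      refine Finset.sum_congr rfl fun l hl => ?_
      have hn := hnest m n p i (i + l) f g hh (Nat.le_add_right i l) (by
        have := Finset.mem_range.mp hl; omega) him
      rw [show i + l - i = l by omega] at hn
      rw [hn, ι_cst]
      congr 2
      ring
    rw [Finset.range_eq_Ico,
      ← Finset.sum_Ico_consecutive _ (Nat.zero_le i) (by omega : i ≤ m + n + 1),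
      ← Finset.sum_Ico_consecutive _ (by omega : i ≤ i + n + 1) (by omega : i + n + 1 ≤ m + n + 1),
      ← Finset.range_eq_Ico, hmid]
    abel
  calc Xt comp m n p f g hh
      = ∑ i ∈ Finset.range (m + 1),
          (((∑ j ∈ Finset.range i,
              (-1 : ℤ)^(n*i + p*j) • ι (comp (m + n) p j (comp m n i f g) hh))
            + ∑ l ∈ Finset.range (n + 1),
              (-1 : ℤ)^((n+p)*i + p*l) • ι (comp m (n + p) i f (comp n p l g hh)))
          + ∑ j ∈ Finset.Ico (i + n + 1) (m + n + 1),
              (-1 : ℤ)^(n*i + p*j) • ι (comp (m + n) p j (comp m n i f g) hh)) := by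
        rw [hX]; exact Finset.sum_congr rfl hsplit
    _ = Yt comp m n p f g hh + S1 comp m n p f g hh + S2 comp m n p f g hh := by
        rw [Finset.sum_add_distrib, Finset.sum_add_distrib, ← hY]
        unfold S1 S2
        abel

include hdisj in
lemma S1_eq (m n p : ℕ) (f : V m) (g : V n) (hh : V p) :
    S1 comp m n p f g hh = (-1 : ℤ)^(n*p) • S2 comp m p n f hh g := by
  unfold S1 S2
  rw [Finset.smul_sum]
  simp only [Finset.smul_sum]
  refine (Finset.sum_sigma' (Finset.range (m + 1)) (fun i => Finset.range i)
      (fun i j => (-1 : ℤ)^(n*i + p*j) • ι (comp (m + n) p j (comp m n i f g) hh))).trans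
    (Eq.trans ?_ (Finset.sum_sigma' (Finset.range (m + 1))
      (fun i => Finset.Ico (i + p + 1) (m + p + 1))
      (fun i j => (-1 : ℤ)^(n*p) • (-1 : ℤ)^(p*i + n*j) • ι (comp (m + p) n j (comp m p i f hh) g))).symm)
  refine Finset.sum_nbij' (fun x => ⟨x.2, x.1 + p⟩) (fun x => ⟨x.2 - p, x.1⟩)
    ?_ ?_ ?_ ?_ ?_
  · rintro ⟨i, j⟩ hx
    simp only [Finset.mem_sigma, Finset.mem_range, Finset.mem_Ico] at hx ⊢
    omega
  · rintro ⟨i, j⟩ hx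
    simp only [Finset.mem_sigma, Finset.mem_range, Finset.mem_Ico] at hx ⊢
    omega
  · rintro ⟨i, j⟩ hx
    simp only [Finset.mem_sigma, Finset.mem_range, Finset.mem_Ico] at hx
    show (⟨i + p - p, j⟩ : Σ _ : ℕ, ℕ) = ⟨i, j⟩
    rw [Nat.add_sub_cancel]
  · rintro ⟨i, j⟩ hx
    simp only [Finset.mem_sigma, Finset.mem_range, Finset.mem_Ico] at hx
    show (⟨i, j - p + p⟩ : Σ _ : ℕ, ℕ) = ⟨i, j⟩
    rw [Nat.sub_add_cancel (by omega)]
  · rintro ⟨i, j⟩ hx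
    simp only [Finset.mem_sigma, Finset.mem_range, Finset.mem_Ico] at hx
    have hι : ι (comp (m + n) p j (comp m n i f g) hh)
        = ι (comp (m + p) n (i + p) (comp m p j f hh) g) := by
      have hd := hdisj m n p i j f g hh (by omega) (by omega)
      calc ι (comp (m + n) p j (comp m n i f g) hh)
          = ι (cst V (show m + n + p = m + n + p from rfl)
              (comp (m + n) p j (comp m n i f g) hh)) := (ι_cst _ _).symm
        _ = ι (cst V (show m + p + n = m + n + p from Nat.add_right_comm m p n)
              (comp (m + p) n (i + p) (comp m p j f hh) g)) := by rw [hd]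
        _ = ι (comp (m + p) n (i + p) (comp m p j f hh) g) := ι_cst _ _
    rw [smul_smul, ← pow_add,
      show n*p + (p*j + n*(i + p)) = (n*i + p*j) + 2*(n*p) by ring,
      npow_add_even, hι]

include hadd_left hadd_right hnest hdisj in
lemma Akey (m n p : ℕ) (f : V m) (g : V n) (hh : V p) :
    Xt comp m n p f g hh - Yt comp m n p f g hh
      = (-1 : ℤ)^(n*p) • (Xt comp m p n f hh g - Yt comp m p n f hh g) := by
  have h1 := X_split comp hadd_left hadd_right hnest m n p f g hh
  have h2 := X_split comp hadd_left hadd_right hnest m p n f hh g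
  have e1 := S1_eq comp hdisj m n p f g hh
  have e2 := S1_eq comp hdisj m p n f hh g
  have e2' : S2 comp m n p f g hh = (-1 : ℤ)^(n*p) • S1 comp m p n f hh g := by
    rw [e2, smul_smul, ← pow_add, show n*p + p*n = 0 + 2*(n*p) by ring,
      npow_add_even, pow_zero, one_smul]
  rw [h1, h2, e1, e2']
  module

include hadd_left hadd_right in
lemma ι_gbr2 (a b c : ℕ) (x : V a) (y : V b) (z : V c) :
    ι (gbracket V comp (a + b) c (gbracket V comp a b x y) z)
      = (Xt comp a b c x y z - (-1 : ℤ)^(a*b) • Xt comp b a c y x z)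
        - (-1 : ℤ)^((a+b)*c) •
            (Yt comp c a b z x y - (-1 : ℤ)^(a*b) • Yt comp c b a z y x) := by
  rw [ι_gbracket]
  unfold gbracket
  rw [O_sub_left comp hadd_left, O_zsmul_left comp hadd_left, O_cst_left,
    O_sub_right comp hadd_right, O_zsmul_right comp hadd_right, O_cst_right]
  unfold Xt Yt
  abel

end Key

end Aux

/-- **Gerstenhaber.** If `{V_n, ∘_i}` is a pre-Lie system (the `∘_i` are
`k`-bilinear and satisfy the disjointness and nesting identities), then the bracket
`[f^m, g^n] = f^m ∘ g^n − (-1)^{mn} g^n ∘ f^m` makes `⊕_n V_n` a graded Lie algebra: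
graded antisymmetry and the graded Jacobi identity hold. -/
theorem preLie_graded_lie
    {k : Type*} [Field k] (V : ℕ → Type*)
    [∀ n, AddCommGroup (V n)] [∀ n, Module k (V n)]
    (comp : ∀ m n : ℕ, ℕ → V m → V n → V (m + n))
    (hadd_left : ∀ (m n i : ℕ) (f f' : V m) (g : V n),
      comp m n i (f + f') g = comp m n i f g + comp m n i f' g)
    (hadd_right : ∀ (m n i : ℕ) (f : V m) (g g' : V n),
      comp m n i f (g + g') = comp m n i f g + comp m n i f g')
    (hsmul_left : ∀ (m n i : ℕ) (q : k) (f : V m) (g : V n),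
      comp m n i (q • f) g = q • comp m n i f g)
    (hsmul_right : ∀ (m n i : ℕ) (q : k) (f : V m) (g : V n),
      comp m n i f (q • g) = q • comp m n i f g)
    (hdisj : ∀ (m n p i j : ℕ) (f : V m) (g : V n) (h : V p),
      j + 1 ≤ i → i ≤ m →
      cst V (show m + n + p = m + n + p by omega) (comp (m + n) p j (comp m n i f g) h)
        = cst V (show m + p + n = m + n + p by omega) (comp (m + p) n (i + p) (comp m p j f h) g))
    (hnest : ∀ (m n p i j : ℕ) (f : V m) (g : V n) (h : V p),
      i ≤ j → j ≤ i + n → i ≤ m →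
      comp (m + n) p j (comp m n i f g) h
        = cst V (show m + (n + p) = m + n + p by omega) (comp m (n + p) i f (comp n p (j - i) g h))) :
    (∀ (m n : ℕ) (f : V m) (g : V n),
        gbracket V comp m n f g
          = -((-1 : ℤ)^(m * n) • cst V (by omega) (gbracket V comp n m g f)))
    ∧ (∀ (m n p : ℕ) (f : V m) (g : V n) (h : V p),
        (-1 : ℤ)^(m * p) • gbracket V comp (m + n) p (gbracket V comp m n f g) h
          + (-1 : ℤ)^(n * m) •
              cst V (by omega) (gbracket V comp (n + p) m (gbracket V comp n p g h) f)
          + (-1 : ℤ)^(p * n) •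
              cst V (by omega) (gbracket V comp (p + m) n (gbracket V comp p m h f) g)
          = 0) := by
  constructor
  · intro m n f g
    apply ι_inj
    rw [ι_gbracket, map_neg, map_zsmul, ι_cst, ι_gbracket, Nat.mul_comm n m]
    rcases Nat.even_or_odd (m * n) with hmn | hmn <;>
      simp only [hmn.neg_one_pow] <;> module
  · intro m n p f g hh
    apply ι_inj
    rw [map_add, map_add, map_zsmul, map_zsmul, map_zsmul, ι_cst, ι_cst, map_zero,
      ι_gbr2 comp hadd_left hadd_right m n p f g hh,
      ι_gbr2 comp hadd_left hadd_right n p m g hh f,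
      ι_gbr2 comp hadd_left hadd_right p m n hh f g]
    rw [show ((-1:ℤ))^(n*m) = (-1:ℤ)^(m*n) by rw [Nat.mul_comm],
        show ((-1:ℤ))^(p*n) = (-1:ℤ)^(n*p) by rw [Nat.mul_comm],
        show ((-1:ℤ))^(p*m) = (-1:ℤ)^(m*p) by rw [Nat.mul_comm],
        show ((-1:ℤ))^((m+n)*p) = (-1:ℤ)^(m*p) * (-1:ℤ)^(n*p) by
          rw [Nat.add_mul, pow_add],
        show ((-1:ℤ))^((n+p)*m) = (-1:ℤ)^(m*n) * (-1:ℤ)^(m*p) by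
          rw [Nat.add_mul, Nat.mul_comm n m, Nat.mul_comm p m, pow_add],
        show ((-1:ℤ))^((p+m)*n) = (-1:ℤ)^(n*p) * (-1:ℤ)^(m*n) by
          rw [Nat.add_mul, Nat.mul_comm p n, Nat.mul_comm m n, pow_add]]
    have K1 : Xt comp m n p f g hh = Yt comp m n p f g hh
        + (-1:ℤ)^(n*p) • (Xt comp m p n f hh g - Yt comp m p n f hh g) := by
      have kk := Akey comp hadd_left hadd_right hdisj hnest m n p f g hh
      rw [← kk]; abel
    have K2 : Xt comp n p m g hh f = Yt comp n p m g hh f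
        + (-1:ℤ)^(m*p) • (Xt comp n m p g f hh - Yt comp n m p g f hh) := by
      have kk := Akey comp hadd_left hadd_right hdisj hnest n p m g hh f
      rw [Nat.mul_comm p m] at kk
      rw [← kk]; abel
    have K3 : Xt comp p m n hh f g = Yt comp p m n hh f g
        + (-1:ℤ)^(m*n) • (Xt comp p n m hh g f - Yt comp p n m hh g f) := by
      have kk := Akey comp hadd_left hadd_right hdisj hnest p m n hh f g
      rw [← kk]; abel
    rw [K1, K2, K3]
    rcases Nat.even_or_odd (m * n) with h1 | h1 <;>
      rcases Nat.even_or_odd (n * p) with h2 | h2 <;>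
        rcases Nat.even_or_odd (m * p) with h3 | h3 <;>
          simp only [h1.neg_one_pow, h2.neg_one_pow, h3.neg_one_pow] <;> module


end PreLieSystem
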